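/- If a preorder R on processes is a probabilistic correspondence simulation, then its lifting R̂ to distributions is a probabilistic correspondence simulation on distributions. -/

import Mathlib

open BigOperators Finsupp

/-- Finitely supported (sub)distributions on `α`. -/
abbrev PDist (α : Type) := α →₀ NNReal

/-- Point distribution. -/
noncomputable def delta {α : Type} (a : α) : PDist α := Finsupp.single a 1

/-- Lifting of a relation on processes to probability distributions:
`(Δ, Θ) ∈ R̂` iff `Δ = Σ_i p_i·δ(P_i)`, `Θ = Σ_i p_i·δ(Q_i)` for a finite index
set with `Σ p_i = 1` and `R (P i) (Q i)` for all `i`. -/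
def Lift {α : Type} (R : α → α → Prop) (Δ Θ : PDist α) : Prop :=
  ∃ (n : ℕ) (p : Fin n → NNReal) (P Q : Fin n → α),
    (∑ i, p i) = 1 ∧
    Δ = ∑ i, p i • delta (P i) ∧
    Θ = ∑ i, p i • delta (Q i) ∧
    ∀ i, R (P i) (Q i)

/-- One reduction step lifted to distributions (Definition of reductions of
distributions): `Δ ⟶ Θ` when `Δ = Σ_i p_i·δ(P_i)`, for each `i` either
`P_i ⟶ Θ_i` or `Θ_i = δ(P_i)`, some `i` makes a step, and `Θ = Σ_i p_i·Θ_i`. -/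
def DStep {α : Type} (step : α → PDist α → Prop) (Δ Θ : PDist α) : Prop :=
  ∃ (n : ℕ) (p : Fin n → NNReal) (P : Fin n → α) (Θi : Fin n → PDist α),
    (∑ i, p i) = 1 ∧
    Δ = ∑ i, p i • delta (P i) ∧
    (∀ i, step (P i) (Θi i) ∨ Θi i = delta (P i)) ∧
    (∃ i, step (P i) (Θi i)) ∧
    Θ = ∑ i, p i • Θi i

/-- Many-step reduction `⟹` on distributions. -/
def MStep {α : Type} (step : α → PDist α → Prop) : PDist α → PDist α → Prop :=
  Relation.ReflTransGen (DStep step)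

/-- Probabilistic (reduction) correspondence simulation on processes. -/
def PCSim {α : Type} (step : α → PDist α → Prop) (R : α → α → Prop) : Prop :=
  ∀ P Q, R P Q →
    (∀ Δ, MStep step (delta P) Δ → ∃ Θ, MStep step (delta Q) Θ ∧ Lift R Δ Θ) ∧
    (∀ Θ, MStep step (delta Q) Θ →
      ∃ Δ' Θ', MStep step (delta P) Δ' ∧ MStep step Θ Θ' ∧ Lift R Δ' Θ')

/-- Probabilistic correspondence simulation on distributions. -/
def DCSim {α : Type} (step : α → PDist α → Prop)
    (S : PDist α → PDist α → Prop) : Prop :=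
  ∀ Δ Θ, S Δ Θ →
    (∀ Δ', MStep step Δ Δ' → ∃ Θ', MStep step Θ Θ' ∧ S Δ' Θ') ∧
    (∀ Θ', MStep step Θ Θ' →
      ∃ Δ'' Θ'', MStep step Δ Δ'' ∧ MStep step Θ' Θ'' ∧ S Δ'' Θ'')

namespace AuxPCS
variable {α : Type}

def mass (Δ : PDist α) : NNReal := Δ.sum fun _ v => v
lemma mass_zero : mass (0 : PDist α) = 0 := Finsupp.sum_zero_index
lemma mass_add (Δ Θ : PDist α) : mass (Δ + Θ) = mass Δ + mass Θ :=
  Finsupp.sum_add_index' (fun _ => rfl) (fun _ _ _ => rfl)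
lemma mass_sum {ι : Type} (s : Finset ι) (f : ι → PDist α) :
    mass (∑ i ∈ s, f i) = ∑ i ∈ s, mass (f i) := by
  classical
  induction s using Finset.induction_on with
  | empty => simp [mass_zero]
  | @insert a s h ih => simp [Finset.sum_insert h, mass_add, ih]
lemma mass_smul (c : NNReal) (Δ : PDist α) : mass (c • Δ) = c * mass Δ := by
  unfold mass
  rw [Finsupp.sum_smul_index (fun _ => rfl), Finsupp.mul_sum]
lemma mass_delta (a : α) : mass (delta a) = 1 := by
  simp [mass, delta, Finsupp.sum_single_index]
lemma smul_delta (c : NNReal) (a : α) : c • delta a = Finsupp.single a c := by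
  simp [delta, Finsupp.smul_single]
lemma mass_combo {ι : Type} (s : Finset ι) (p : ι → NNReal) (f : ι → PDist α) :
    mass (∑ i ∈ s, p i • f i) = ∑ i ∈ s, p i * mass (f i) := by
  rw [mass_sum]; simp [mass_smul]
lemma sum_smul_delta_apply {ι : Type} [Fintype ι] [DecidableEq α]
    (p : ι → NNReal) (P : ι → α) (a : α) :
    (∑ i, p i • delta (P i)) a = ∑ i, if P i = a then p i else 0 := by
  classical
  rw [Finsupp.finset_sum_apply]
  refine Finset.sum_congr rfl fun i _ => ?_
  simp [delta, Finsupp.smul_apply, Finsupp.single_apply, mul_ite]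
lemma eq_sum_support (Δ : PDist α) :
    Δ = ∑ i : Δ.support, Δ (i : α) • delta (i : α) := by
  conv_lhs => rw [← Finsupp.sum_single Δ]
  rw [Finset.sum_coe_sort Δ.support (fun a => Δ a • delta a)]
  exact Finset.sum_congr rfl fun a _ => by rw [smul_delta]
lemma mass_eq_sum_support (Δ : PDist α) : mass Δ = ∑ i : Δ.support, Δ (i : α) := by
  conv_lhs => rw [eq_sum_support Δ, mass_combo]
  refine Finset.sum_congr rfl fun a _ => by rw [mass_delta, mul_one]

variable (step : α → PDist α → Prop)

/-- Like `DStep` but allowing the trivial step where no component moves. -/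
def PreStep (Δ Θ : PDist α) : Prop :=
  ∃ (n : ℕ) (p : Fin n → NNReal) (P : Fin n → α) (T : Fin n → PDist α),
    (∑ i, p i) = 1 ∧
    Δ = ∑ i, p i • delta (P i) ∧
    (∀ i, step (P i) (T i) ∨ T i = delta (P i)) ∧
    Θ = ∑ i, p i • T i

variable {step}

lemma prestep_of_fintype {ι : Type} [Fintype ι] {X Y : PDist α}
    (p : ι → NNReal) (P : ι → α) (T : ι → PDist α)
    (h1 : (∑ i, p i) = 1) (h2 : X = ∑ i, p i • delta (P i))
    (h3 : ∀ i, step (P i) (T i) ∨ T i = delta (P i))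
    (h4 : Y = ∑ i, p i • T i) : PreStep step X Y := by
  let e := Fintype.equivFin ι
  refine ⟨Fintype.card ι, p ∘ e.symm, P ∘ e.symm, T ∘ e.symm, ?_, ?_, fun i => h3 _, ?_⟩
  · rw [← h1]; exact Equiv.sum_comp e.symm p
  · rw [h2]; exact (Equiv.sum_comp e.symm (fun i => p i • delta (P i))).symm
  · rw [h4]; exact (Equiv.sum_comp e.symm (fun i => p i • T i)).symm

lemma lift_of_fintype {R : α → α → Prop} {ι : Type} [Fintype ι] {X Y : PDist α}
    (p : ι → NNReal) (P Q : ι → α)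
    (h1 : (∑ i, p i) = 1) (h2 : X = ∑ i, p i • delta (P i))
    (h3 : Y = ∑ i, p i • delta (Q i)) (h4 : ∀ i, R (P i) (Q i)) : Lift R X Y := by
  let e := Fintype.equivFin ι
  refine ⟨Fintype.card ι, p ∘ e.symm, P ∘ e.symm, Q ∘ e.symm, ?_, ?_, ?_, fun i => h4 _⟩
  · rw [← h1]; exact Equiv.sum_comp e.symm p
  · rw [h2]; exact (Equiv.sum_comp e.symm (fun i => p i • delta (P i))).symm
  · rw [h3]; exact (Equiv.sum_comp e.symm (fun i => p i • delta (Q i))).symm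

lemma dstep_prestep {X Y : PDist α} (h : DStep step X Y) : PreStep step X Y := by
  obtain ⟨n, p, P, T, h1, h2, h3, _, h5⟩ := h
  exact ⟨n, p, P, T, h1, h2, h3, h5⟩

lemma prestep_refl {X : PDist α} (h : mass X = 1) : PreStep step X X := by
  refine prestep_of_fintype (ι := X.support) (fun i => X (i : α)) (fun i => (i : α))
    (fun i => delta (i : α)) ?_ (eq_sum_support X) (fun i => Or.inr rfl) (eq_sum_support X)
  rw [← mass_eq_sum_support]; exact h

lemma prestep_mass (hm : ∀ P T, step P T → mass T = 1) {X Y : PDist α}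
    (h : PreStep step X Y) : mass X = 1 ∧ mass Y = 1 := by
  obtain ⟨n, p, P, T, h1, h2, h3, h4⟩ := h
  have hT : ∀ i, mass (T i) = 1 := by
    intro i
    rcases h3 i with h | h
    · exact hm _ _ h
    · rw [h, mass_delta]
  constructor
  · rw [h2, mass_combo]; simp [mass_delta, h1]
  · rw [h4, mass_combo]; simp [hT, h1]

lemma prestep_mstep {X Y : PDist α} (h : PreStep step X Y) : MStep step X Y := by
  classical
  obtain ⟨n, p, P, T, h1, h2, h3, h4⟩ := h
  by_cases hs : ∃ i, step (P i) (T i)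
  · exact Relation.ReflTransGen.single ⟨n, p, P, T, h1, h2, h3, hs, h4⟩
  · push_neg at hs
    have hT : ∀ i, T i = delta (P i) := fun i => (h3 i).resolve_left (hs i)
    have : Y = X := by rw [h4, h2]; exact Finset.sum_congr rfl fun i _ => by rw [hT i]
    rw [this]
    exact Relation.ReflTransGen.refl

variable (step)

/-- `k`-fold iteration of `PreStep`. -/
def PN : ℕ → PDist α → PDist α → Prop
  | 0 => fun X Y => X = Y
  | k + 1 => fun X Y => ∃ Z, PreStep step X Z ∧ PN k Z Y

variable {step}

lemma pn_mass (hm : ∀ P T, step P T → mass T = 1) :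
    ∀ {k : ℕ} {X Y : PDist α}, PN step k X Y → mass X = 1 → mass Y = 1 := by
  intro k
  induction k with
  | zero => intro X Y h hX; rw [← h]; exact hX
  | succ k ih =>
    rintro X Y ⟨Z, h1, h2⟩ hX
    exact ih h2 (prestep_mass hm h1).2

lemma pn_refl {X : PDist α} (h : mass X = 1) : ∀ j, PN step j X X := by
  intro j
  induction j with
  | zero => rfl
  | succ j ih => exact ⟨X, prestep_refl h, ih⟩

lemma pn_pad (hm : ∀ P T, step P T → mass T = 1) :
    ∀ {k : ℕ} {X Y : PDist α}, PN step k X Y → mass X = 1 → ∀ j, PN step (k + j) X Y := by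
  intro k
  induction k with
  | zero =>
    intro X Y h hX j
    rw [← h]
    have : 0 + j = j := by omega
    rw [this]
    exact pn_refl hX j
  | succ k ih =>
    rintro X Y ⟨Z, h1, h2⟩ hX j
    have harith : k + 1 + j = (k + j) + 1 := by omega
    rw [harith]
    exact ⟨Z, h1, ih h2 (prestep_mass hm h1).2 j⟩

lemma pn_mstep : ∀ {k : ℕ} {X Y : PDist α}, PN step k X Y → MStep step X Y := by
  intro k
  induction k with
  | zero => intro X Y h; rw [h]; exact Relation.ReflTransGen.refl
  | succ k ih =>
    rintro X Y ⟨Z, h1, h2⟩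
    exact Relation.ReflTransGen.trans (prestep_mstep h1) (ih h2)

lemma mstep_pn {X Y : PDist α} (h : MStep step X Y) : ∃ k, PN step k X Y := by
  induction h using Relation.ReflTransGen.head_induction_on with
  | refl => exact ⟨0, rfl⟩
  | head h' _ ih =>
    obtain ⟨k, hk⟩ := ih
    exact ⟨k + 1, _, dstep_prestep h', hk⟩

lemma prestep_combine {ι : Type} [Fintype ι] {p : ι → NNReal} (hp : (∑ i, p i) = 1)
    {X Y : ι → PDist α} (h : ∀ i, PreStep step (X i) (Y i)) :
    PreStep step (∑ i, p i • X i) (∑ i, p i • Y i) := by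
  choose m q P T hq hX hT hY using h
  refine prestep_of_fintype (ι := Σ i, Fin (m i))
    (fun x => p x.1 * q x.1 x.2) (fun x => P x.1 x.2) (fun x => T x.1 x.2) ?_ ?_
    (fun x => hT x.1 x.2) ?_
  · rw [← Finset.univ_sigma_univ, Finset.sum_sigma]
    rw [← hp]
    refine Finset.sum_congr rfl fun i _ => ?_
    show (∑ j : Fin (m i), p i * q i j) = p i
    rw [← Finset.mul_sum, hq i, mul_one]
  · rw [← Finset.univ_sigma_univ, Finset.sum_sigma]
    refine Finset.sum_congr rfl fun i _ => ?_
    rw [hX i, Finset.smul_sum]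
    exact Finset.sum_congr rfl fun j _ => by rw [mul_smul]
  · rw [← Finset.univ_sigma_univ, Finset.sum_sigma]
    refine Finset.sum_congr rfl fun i _ => ?_
    rw [hY i, Finset.smul_sum]
    exact Finset.sum_congr rfl fun j _ => by rw [mul_smul]

lemma lift_combine {R : α → α → Prop} {ι : Type} [Fintype ι] {p : ι → NNReal}
    (hp : (∑ i, p i) = 1) {X Y : ι → PDist α} (h : ∀ i, Lift R (X i) (Y i)) :
    Lift R (∑ i, p i • X i) (∑ i, p i • Y i) := by
  choose m q P Q hq hX hY hR using h
  refine lift_of_fintype (ι := Σ i, Fin (m i))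
    (fun x => p x.1 * q x.1 x.2) (fun x => P x.1 x.2) (fun x => Q x.1 x.2) ?_ ?_ ?_
    (fun x => hR x.1 x.2)
  · rw [← Finset.univ_sigma_univ, Finset.sum_sigma]
    rw [← hp]
    refine Finset.sum_congr rfl fun i _ => ?_
    show (∑ j : Fin (m i), p i * q i j) = p i
    rw [← Finset.mul_sum, hq i, mul_one]
  · rw [← Finset.univ_sigma_univ, Finset.sum_sigma]
    refine Finset.sum_congr rfl fun i _ => ?_
    rw [hX i, Finset.smul_sum]
    exact Finset.sum_congr rfl fun j _ => by rw [mul_smul]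
  · rw [← Finset.univ_sigma_univ, Finset.sum_sigma]
    refine Finset.sum_congr rfl fun i _ => ?_
    rw [hY i, Finset.smul_sum]
    exact Finset.sum_congr rfl fun j _ => by rw [mul_smul]

lemma pn_combine {ι : Type} [Fintype ι] {p : ι → NNReal} (hp : (∑ i, p i) = 1) :
    ∀ {k : ℕ} {X Y : ι → PDist α}, (∀ i, PN step k (X i) (Y i)) →
      PN step k (∑ i, p i • X i) (∑ i, p i • Y i) := by
  intro k
  induction k with
  | zero =>
    intro X Y h
    exact Finset.sum_congr rfl fun i _ => by rw [h i]
  | succ k ih =>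
    intro X Y h
    choose Z hZ1 hZ2 using h
    exact ⟨∑ i, p i • Z i, prestep_combine hp hZ1, ih hZ2⟩

lemma mstep_combine (hm : ∀ P T, step P T → mass T = 1)
    {ι : Type} [Fintype ι] {p : ι → NNReal} (hp : (∑ i, p i) = 1)
    {X Y : ι → PDist α} (hX : ∀ i, mass (X i) = 1) (h : ∀ i, MStep step (X i) (Y i)) :
    MStep step (∑ i, p i • X i) (∑ i, p i • Y i) := by
  choose k hk using fun i => mstep_pn (h i)
  set K := Finset.univ.sup k with hK
  have hall : ∀ i, PN step K (X i) (Y i) := by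
    intro i
    have hle : k i ≤ K := Finset.le_sup (Finset.mem_univ i)
    have := pn_pad hm (hk i) (hX i) (K - k i)
    rwa [Nat.add_sub_cancel' hle] at this
  exact pn_mstep (pn_combine hp hall)

lemma dstep_split (_hm : ∀ P T, step P T → mass T = 1)
    {ι : Type} [Fintype ι] {p : ι → NNReal} {X : ι → PDist α} {Δ Θ : PDist α}
    (hD : DStep step Δ Θ) (hΔ : Δ = ∑ i, p i • X i) (hX : ∀ i, mass (X i) = 1) :
    ∃ Y : ι → PDist α, (∀ i, PreStep step (X i) (Y i)) ∧ Θ = ∑ i, p i • Y i := by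
  classical
  obtain ⟨m, q, b, T, hq1, hΔ2, hT, _, hΘ⟩ := hD
  set c : ι → Fin m → NNReal := fun i j => q j * X i (b j) / Δ (b j) with hc
  -- pointwise value of Δ via the step decomposition
  have hΔa : ∀ a, Δ a = ∑ j, if b j = a then q j else 0 := by
    intro a; rw [hΔ2, sum_smul_delta_apply]
  -- pointwise value of Δ via the given decomposition
  have hΔa' : ∀ a, Δ a = ∑ i, p i * X i a := by
    intro a
    rw [hΔ, Finsupp.finset_sum_apply]
    exact Finset.sum_congr rfl fun i _ => by rw [Finsupp.smul_apply, smul_eq_mul]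
  have hq_le : ∀ j, q j ≤ Δ (b j) := by
    intro j
    rw [hΔa (b j)]
    have : (if b j = b j then q j else 0) ≤ ∑ j', if b j' = b j then q j' else 0 :=
      Finset.single_le_sum (f := fun j' => if b j' = b j then q j' else 0)
        (fun _ _ => zero_le) (Finset.mem_univ j)
    simpa using this
  have hX0 : ∀ i, p i ≠ 0 → ∀ a, Δ a = 0 → X i a = 0 := by
    intro i hpi a h0
    have hle : p i * X i a ≤ Δ a := by
      rw [hΔa' a]
      exact Finset.single_le_sum (f := fun i' => p i' * X i' a)
        (fun _ _ => zero_le) (Finset.mem_univ i)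
    rw [h0, le_zero_iff, mul_eq_zero] at hle
    exact hle.resolve_left hpi
  have key : ∀ i, p i ≠ 0 → X i = ∑ j, c i j • delta (b j) := by
    intro i hpi
    ext a
    rw [sum_smul_delta_apply]
    have hterm : ∀ j, (if b j = a then c i j else 0)
        = (if b j = a then q j else 0) * (X i a / Δ a) := by
      intro j
      by_cases hba : b j = a
      · rw [if_pos hba, if_pos hba, hc]
        simp only [hba]
        rw [mul_div_assoc]
      · rw [if_neg hba, if_neg hba, zero_mul]
    rw [Finset.sum_congr rfl fun j _ => hterm j, ← Finset.sum_mul, ← hΔa a]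
    by_cases h0 : Δ a = 0
    · rw [h0, zero_mul, hX0 i hpi a h0]
    · rw [mul_comm, div_mul_cancel₀ _ h0]
  set Y : ι → PDist α := fun i => if p i = 0 then X i else ∑ j, c i j • T j with hY
  refine ⟨Y, ?_, ?_⟩
  · intro i
    by_cases hpi : p i = 0
    · rw [hY]; simp only [if_pos hpi]
      exact prestep_refl (hX i)
    · have hXi := key i hpi
      have hsum : (∑ j, c i j) = 1 := by
        have := hX i
        rw [hXi, mass_combo] at this
        simpa [mass_delta] using this
      refine prestep_of_fintype (c i) b T hsum hXi hT ?_
      rw [hY]; simp only [if_neg hpi]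
  · -- Θ = ∑ i, p i • Y i
    have hswap : (∑ i, p i • Y i) = ∑ j, (∑ i, p i * c i j) • T j := by
      have h1 : ∀ i, p i • Y i = ∑ j, (p i * c i j) • T j := by
        intro i
        by_cases hpi : p i = 0
        · simp [hY, hpi]
        · rw [hY]; simp only [if_neg hpi]
          rw [Finset.smul_sum]
          exact Finset.sum_congr rfl fun j _ => by rw [mul_smul]
      rw [Finset.sum_congr rfl fun i _ => h1 i, Finset.sum_comm]
      exact Finset.sum_congr rfl fun j _ => by rw [Finset.sum_smul]
    have hcoef : ∀ j, (∑ i, p i * c i j) = q j := by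
      intro j
      by_cases h0 : Δ (b j) = 0
      · have hqj : q j = 0 := le_antisymm (h0 ▸ hq_le j) zero_le
        have : ∀ i, p i * c i j = 0 := by
          intro i; rw [hc]; simp [h0, hqj]
        simp [this, hqj]
      · have hterm : ∀ i, p i * c i j = (p i * X i (b j)) * (q j * (Δ (b j))⁻¹) := by
          intro i
          rw [hc]
          simp only [div_eq_mul_inv]
          ring
        rw [Finset.sum_congr rfl fun i _ => hterm i, ← Finset.sum_mul, ← hΔa' (b j),
          ← mul_assoc, mul_comm (Δ (b j)) (q j), mul_assoc, mul_inv_cancel₀ h0, mul_one]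
    rw [hΘ, hswap]
    exact Finset.sum_congr rfl fun j _ => by rw [hcoef j]

lemma mstep_split (hm : ∀ P T, step P T → mass T = 1)
    {ι : Type} [Fintype ι] (p : ι → NNReal) {Δ Θ : PDist α} (hM : MStep step Δ Θ) :
    ∀ X : ι → PDist α, Δ = ∑ i, p i • X i → (∀ i, mass (X i) = 1) →
      ∃ Y : ι → PDist α, (∀ i, MStep step (X i) (Y i)) ∧ (∀ i, mass (Y i) = 1) ∧
        Θ = ∑ i, p i • Y i := by
  induction hM using Relation.ReflTransGen.head_induction_on with
  | refl =>
    intro X h1 h2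
    exact ⟨X, fun i => Relation.ReflTransGen.refl, h2, h1⟩
  | head hstep _ ih =>
    intro X h1 h2
    obtain ⟨Z, hZ1, hZ2⟩ := dstep_split hm hstep h1 h2
    have hZm : ∀ i, mass (Z i) = 1 := fun i => (prestep_mass hm (hZ1 i)).2
    obtain ⟨Y, hY1, hY2, hY3⟩ := ih Z hZ2 hZm
    exact ⟨Y, fun i => Relation.ReflTransGen.trans (prestep_mstep (hZ1 i)) (hY1 i), hY2, hY3⟩

section Main
variable {α : Type} {step : α → PDist α → Prop} {R : α → α → Prop}

lemma lift_mass (h : Lift R Δ Θ) : mass Δ = 1 ∧ mass Θ = 1 := by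
  obtain ⟨n, p, P, Q, hp, hΔ, hΘ, _⟩ := h
  constructor
  · rw [hΔ, mass_combo]; simp [mass_delta, hp]
  · rw [hΘ, mass_combo]; simp [mass_delta, hp]

end Main
end AuxPCS

/-- Preservation of the correspondence property: if the preorder `R` is a
probabilistic correspondence simulation, then so is its lifting `R̂`. -/
theorem lift_pcsim {α : Type} (step : α → PDist α → Prop) (R : α → α → Prop)
    (hrefl : Reflexive R) (htrans : Transitive R)
    (hsim : PCSim step R) : DCSim step (Lift R) := by
  classical
  have hm : ∀ P T, step P T → AuxPCS.mass T = 1 := by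
    intro P T hPT
    have hD : DStep step (delta P) T := by
      refine ⟨1, fun _ => 1, fun _ => P, fun _ => T, by simp, by simp, fun _ => Or.inl hPT,
        ⟨0, hPT⟩, by simp⟩
    have hMS : MStep step (delta P) T := Relation.ReflTransGen.single hD
    obtain ⟨Θ, _, hL⟩ := (hsim P P (hrefl P)).1 T hMS
    exact (AuxPCS.lift_mass hL).1
  intro Δ Θ hLift
  obtain ⟨n, p, P, Q, hp, hΔ, hΘ, hR⟩ := hLift
  constructor
  · intro Δ' hΔ'
    obtain ⟨Y, hY1, hY2, hY3⟩ := AuxPCS.mstep_split hm p hΔ' (fun i => delta (P i)) hΔ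
      (fun i => AuxPCS.mass_delta _)
    have h2 : ∀ i, ∃ W, MStep step (delta (Q i)) W ∧ Lift R (Y i) W :=
      fun i => (hsim _ _ (hR i)).1 _ (hY1 i)
    choose W hW1 hW2 using h2
    refine ⟨∑ i, p i • W i, ?_, ?_⟩
    · rw [hΘ]
      exact AuxPCS.mstep_combine hm hp (fun i => AuxPCS.mass_delta _) hW1
    · rw [hY3]
      exact AuxPCS.lift_combine hp hW2
  · intro Θ' hΘ'
    obtain ⟨Y, hY1, hY2, hY3⟩ := AuxPCS.mstep_split hm p hΘ' (fun i => delta (Q i)) hΘ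
      (fun i => AuxPCS.mass_delta _)
    have h2 : ∀ i, ∃ A B, MStep step (delta (P i)) A ∧ MStep step (Y i) B ∧ Lift R A B :=
      fun i => (hsim _ _ (hR i)).2 _ (hY1 i)
    choose A B hA hB hAB using h2
    refine ⟨∑ i, p i • A i, ∑ i, p i • B i, ?_, ?_, AuxPCS.lift_combine hp hAB⟩
    · rw [hΔ]
      exact AuxPCS.mstep_combine hm hp (fun i => AuxPCS.mass_delta _) hA
    · rw [hY3]
      exact AuxPCS.mstep_combine hm hp hY2 hB
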